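/- Let n ≥ 1 and let ρ be a density matrix indexed by Fin n × Fin n. If there exists a density matrix σ indexed by Fin n × Fin n × Fin n with Tr₃ σ = ρ and Tr₂ σ = ρ, then for every pair of quantum channels Φ₁, Φ₂ : Matrix (Fin n) (Fin n) ℂ → Matrix (Fin n) (Fin n) ℂ there exists a density matrix σ̃ indexed by Fin n × Fin n × Fin n with Tr₃ σ̃ = (id ⊗ Φ₁)(ρ) and Tr₂ σ̃ = (id ⊗ Φ₂)(ρ). (Thus a state steerable by some pair of channels is steerable by two copies of the identity channel.) -/

import Mathlib

open Matrix BigOperators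
open scoped ComplexOrder

noncomputable section

/-- A density matrix: positive semidefinite with trace 1. -/
def IsDensity {ι : Type*} [Fintype ι] (M : Matrix ι ι ℂ) : Prop :=
  M.PosSemidef ∧ M.trace = 1

/-- The Choi matrix of a linear map between matrix spaces, indexed by (output × input). -/
def choi {ι κ : Type*} [Fintype ι] [DecidableEq ι]
    (Φ : Matrix ι ι ℂ →ₗ[ℂ] Matrix κ κ ℂ) : Matrix (κ × ι) (κ × ι) ℂ :=
  fun p q => Φ (Matrix.single p.2 q.2 1) p.1 q.1

/-- A quantum channel: trace preserving with positive semidefinite Choi matrix. -/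
def IsQChannel {ι κ : Type*} [Fintype ι] [DecidableEq ι] [Fintype κ]
    (Φ : Matrix ι ι ℂ →ₗ[ℂ] Matrix κ κ ℂ) : Prop :=
  (∀ X, (Φ X).trace = X.trace) ∧ (choi Φ).PosSemidef

/-- The tensor product `Φ ⊗ Ψ` of maps on matrix spaces, determined by
`(Φ ⊗ Ψ)(X ⊗ₖ Y) = (Φ X) ⊗ₖ (Ψ Y)`. -/
def tmap {α β γ δ : Type*} [Fintype α] [DecidableEq α] [Fintype γ] [DecidableEq γ]
    (Φ : Matrix α α ℂ → Matrix β β ℂ) (Ψ : Matrix γ γ ℂ → Matrix δ δ ℂ)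
    (M : Matrix (α × γ) (α × γ) ℂ) : Matrix (β × δ) (β × δ) ℂ :=
  fun p q => ∑ a, ∑ a', ∑ c, ∑ c', M (a, c) (a', c') *
    (Φ (Matrix.single a a' 1) p.1 q.1 * Ψ (Matrix.single c c' 1) p.2 q.2)

/-- Partial trace over the second factor of a bipartite matrix. -/
def ptr2 {α β : Type*} [Fintype β] (M : Matrix (α × β) (α × β) ℂ) : Matrix α α ℂ :=
  fun a a' => ∑ b, M (a, b) (a', b)

/-- Partial trace over the first factor of a bipartite matrix. -/
def ptr1 {α β : Type*} [Fintype α] (M : Matrix (α × β) (α × β) ℂ) : Matrix β β ℂ :=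
  fun b b' => ∑ a, M (a, b) (a, b')

/-- Compatibility of two quantum channels: they arise as the two marginals of a single
channel into the tensor product. -/
def Compatible {n : ℕ} (Φ₁ Φ₂ : Matrix (Fin n) (Fin n) ℂ →ₗ[ℂ] Matrix (Fin n) (Fin n) ℂ) : Prop :=
  ∃ Φ : Matrix (Fin n) (Fin n) ℂ →ₗ[ℂ] Matrix (Fin n × Fin n) (Fin n × Fin n) ℂ,
    IsQChannel Φ ∧ ∀ ρ : Matrix (Fin n) (Fin n) ℂ, IsDensity ρ →
      ptr2 (Φ ρ) = Φ₁ ρ ∧ ptr1 (Φ ρ) = Φ₂ ρ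

/-- Partial trace over the third factor of a tripartite matrix. -/
def ptrace3 {α β γ : Type*} [Fintype γ] (M : Matrix (α × β × γ) (α × β × γ) ℂ) :
    Matrix (α × β) (α × β) ℂ :=
  fun p q => ∑ c, M (p.1, p.2, c) (q.1, q.2, c)

/-- Partial trace over the second factor of a tripartite matrix. -/
def ptrace2 {α β γ : Type*} [Fintype β] (M : Matrix (α × β × γ) (α × β × γ) ℂ) :
    Matrix (α × γ) (α × γ) ℂ :=
  fun p q => ∑ b, M (p.1, b, p.2) (q.1, b, q.2)

/-- if a bipartite state is not steerable by two copies of the identity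
channel, then it is not steerable by any pair of quantum channels. -/

private lemma swap4 {α β γ δ ε : Type*} [Fintype α] [Fintype β] [Fintype γ] [Fintype δ] [Fintype ε]
    (f : α → β → γ → δ → ε → ℂ) :
    ∑ z : α, ∑ b : β, ∑ c : γ, ∑ b' : δ, ∑ c' : ε, f z b c b' c'
      = ∑ b, ∑ c, ∑ b', ∑ c', ∑ z, f z b c b' c' :=
  Finset.sum_comm.trans <| Finset.sum_congr rfl fun _ _ =>
    Finset.sum_comm.trans <| Finset.sum_congr rfl fun _ _ =>
      Finset.sum_comm.trans <| Finset.sum_congr rfl fun _ _ => Finset.sum_comm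

private lemma swap3 {α β γ : Type*} [Fintype α] [Fintype β] [Fintype γ]
    (f : α → β → γ → ℂ) :
    ∑ z : α, ∑ b : β, ∑ c : γ, f z b c = ∑ b, ∑ c, ∑ z, f z b c :=
  Finset.sum_comm.trans <| Finset.sum_congr rfl fun _ _ => Finset.sum_comm

open scoped MatrixOrder in
private lemma psd_exists_eq_ct_mul {m : Type*} [Fintype m] [DecidableEq m] {M : Matrix m m ℂ}
    (h : M.PosSemidef) : ∃ B : Matrix m m ℂ, M = Bᴴ * B :=
  CStarAlgebra.nonneg_iff_eq_star_mul_self.mp h.nonneg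

set_option maxHeartbeats 2000000 in
/-- if a bipartite state is not steerable by two copies of the identity
channel, then it is not steerable by any pair of quantum channels. -/
theorem not_steerable_of_id {n : ℕ} (hn : 1 ≤ n)
    (ρ : Matrix (Fin n × Fin n) (Fin n × Fin n) ℂ) (hρ : IsDensity ρ)
    (σ : Matrix (Fin n × Fin n × Fin n) (Fin n × Fin n × Fin n) ℂ)
    (hσ : IsDensity σ) (h3 : ptrace3 σ = ρ) (h2 : ptrace2 σ = ρ)
    (Φ₁ Φ₂ : Matrix (Fin n) (Fin n) ℂ →ₗ[ℂ] Matrix (Fin n) (Fin n) ℂ)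
    (hΦ₁ : IsQChannel Φ₁) (hΦ₂ : IsQChannel Φ₂) :
    ∃ σ' : Matrix (Fin n × Fin n × Fin n) (Fin n × Fin n × Fin n) ℂ,
      IsDensity σ' ∧
      ptrace3 σ' = tmap id (⇑Φ₁) ρ ∧
      ptrace2 σ' = tmap id (⇑Φ₂) ρ := by
  classical
  obtain ⟨A, hA⟩ := psd_exists_eq_ct_mul hσ.1
  obtain ⟨B, hB⟩ := psd_exists_eq_ct_mul hΦ₁.2
  obtain ⟨C, hC⟩ := psd_exists_eq_ct_mul hΦ₂.2
  have hA' : ∀ p q : Fin n × Fin n × Fin n, σ p q = ∑ i, star (A i p) * A i q := by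
    intro p q
    rw [hA]
    simp only [Matrix.mul_apply, Matrix.conjTranspose_apply]
  have hB' : ∀ (b b' y y' : Fin n),
      Φ₁ (Matrix.single b b' 1) y y' = ∑ k, star (B k (y, b)) * B k (y', b') := by
    intro b b' y y'
    have h : choi Φ₁ (y, b) (y', b') = (Bᴴ * B) (y, b) (y', b') := by rw [hB]
    simpa only [choi, Matrix.mul_apply, Matrix.conjTranspose_apply] using h
  have hC' : ∀ (c c' z z' : Fin n),
      Φ₂ (Matrix.single c c' 1) z z' = ∑ l, star (C l (z, c)) * C l (z', c') := by
    intro c c' z z'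
    have h : choi Φ₂ (z, c) (z', c') = (Cᴴ * C) (z, c) (z', c') := by rw [hC]
    simpa only [choi, Matrix.mul_apply, Matrix.conjTranspose_apply] using h
  have htr1 : ∀ b b' : Fin n, ∑ y, Φ₁ (Matrix.single b b' 1) y y
      = if b = b' then 1 else 0 := by
    intro b b'
    have h := hΦ₁.1 (Matrix.single b b' 1)
    simp only [Matrix.trace, Matrix.diag] at h
    rw [h]
    simp [Matrix.single, ite_and, eq_comm]
  have htr2 : ∀ c c' : Fin n, ∑ z, Φ₂ (Matrix.single c c' 1) z z
      = if c = c' then 1 else 0 := by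
    intro c c'
    have h := hΦ₂.1 (Matrix.single c c' 1)
    simp only [Matrix.trace, Matrix.diag] at h
    rw [h]
    simp [Matrix.single, ite_and, eq_comm]
  -- the dilation
  set S : Matrix ((Fin n × Fin n × Fin n) × (Fin n × Fin n) × (Fin n × Fin n))
      (Fin n × Fin n × Fin n) ℂ :=
    fun j p => ∑ w : Fin n × Fin n,
      A j.1 (p.1, w.1, w.2) * (B j.2.1 (p.2.1, w.1) * C j.2.2 (p.2.2, w.2)) with hS
  -- key entrywise identity
  have key : ∀ p q : Fin n × Fin n × Fin n, (Sᴴ * S) p q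
      = ∑ b, ∑ c, ∑ b', ∑ c', σ (p.1, b, c) (q.1, b', c') *
          (Φ₁ (Matrix.single b b' 1) p.2.1 q.2.1 *
           Φ₂ (Matrix.single c c' 1) p.2.2 q.2.2) := by
    intro p q
    rw [Matrix.mul_apply]
    calc ∑ j, Sᴴ p j * S j q
        = ∑ j : (Fin n × Fin n × Fin n) × (Fin n × Fin n) × (Fin n × Fin n),
            ∑ u : Fin n × Fin n, ∑ v : Fin n × Fin n,
            star (A j.1 (p.1, u.1, u.2) * (B j.2.1 (p.2.1, u.1) * C j.2.2 (p.2.2, u.2))) *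
            (A j.1 (q.1, v.1, v.2) * (B j.2.1 (q.2.1, v.1) * C j.2.2 (q.2.2, v.2))) := by
          refine Finset.sum_congr rfl fun j _ => ?_
          rw [Matrix.conjTranspose_apply, hS]
          rw [star_sum, Finset.sum_mul_sum]
      _ = ∑ u : Fin n × Fin n, ∑ v : Fin n × Fin n,
            ∑ j : (Fin n × Fin n × Fin n) × (Fin n × Fin n) × (Fin n × Fin n),
            star (A j.1 (p.1, u.1, u.2) * (B j.2.1 (p.2.1, u.1) * C j.2.2 (p.2.2, u.2))) *
            (A j.1 (q.1, v.1, v.2) * (B j.2.1 (q.2.1, v.1) * C j.2.2 (q.2.2, v.2))) := swap3 _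
      _ = ∑ b, ∑ c, ∑ b', ∑ c', σ (p.1, b, c) (q.1, b', c') *
            (Φ₁ (Matrix.single b b' 1) p.2.1 q.2.1 *
             Φ₂ (Matrix.single c c' 1) p.2.2 q.2.2) := by
          rw [Fintype.sum_prod_type]
          refine Finset.sum_congr rfl fun b _ => Finset.sum_congr rfl fun c _ => ?_
          rw [Fintype.sum_prod_type]
          refine Finset.sum_congr rfl fun b' _ => Finset.sum_congr rfl fun c' _ => ?_
          rw [hA', hB' b b', hC' c c', Finset.sum_mul_sum, Finset.sum_mul_sum]
          simp only [Finset.mul_sum]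
          rw [Fintype.sum_prod_type]
          refine Finset.sum_congr rfl fun i _ => ?_
          rw [Fintype.sum_prod_type]
          refine Finset.sum_congr rfl fun k _ => Finset.sum_congr rfl fun l _ => ?_
          simp only [star_mul']
          ring
  -- closed form of the target marginals
  have hR : ∀ (Φ : Matrix (Fin n) (Fin n) ℂ →ₗ[ℂ] Matrix (Fin n) (Fin n) ℂ) (x y x' y' : Fin n),
      tmap id (⇑Φ) ρ (x, y) (x', y')
        = ∑ b, ∑ b', ρ (x, b) (x', b') * Φ (Matrix.single b b' 1) y y' := by
    intro Φ x y x' y'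
    show (∑ a, ∑ a', ∑ b, ∑ b', ρ (a, b) (a', b') *
        (Matrix.single a a' 1 x x' * Φ (Matrix.single b b' 1) y y')) = _
    rw [Finset.sum_eq_single x (fun a _ ha =>
      Finset.sum_eq_zero fun a' _ => Finset.sum_eq_zero fun b _ =>
        Finset.sum_eq_zero fun b' _ => by simp [Matrix.single, ha])
      (by simp)]
    rw [Finset.sum_eq_single x' (fun a' _ ha' =>
      Finset.sum_eq_zero fun b _ => Finset.sum_eq_zero fun b' _ => by
        simp [Matrix.single, ha'])
      (by simp)]
    simp [Matrix.single]
  -- first marginal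
  have hmarg3 : ptrace3 (Sᴴ * S) = tmap id (⇑Φ₁) ρ := by
    have hL : ∀ x y x' y' : Fin n, ptrace3 (Sᴴ * S) (x, y) (x', y')
        = ∑ b, ∑ b', ρ (x, b) (x', b') * Φ₁ (Matrix.single b b' 1) y y' := by
      intro x y x' y'
      show ∑ z, (Sᴴ * S) (x, y, z) (x', y', z) = _
      calc ∑ z, (Sᴴ * S) (x, y, z) (x', y', z)
          = ∑ z, ∑ b, ∑ c, ∑ b', ∑ c', σ (x, b, c) (x', b', c') *
              (Φ₁ (Matrix.single b b' 1) y y' *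
               Φ₂ (Matrix.single c c' 1) z z) :=
            Finset.sum_congr rfl fun z _ => key (x, y, z) (x', y', z)
        _ = ∑ b, ∑ c, ∑ b', ∑ c', ∑ z, σ (x, b, c) (x', b', c') *
              (Φ₁ (Matrix.single b b' 1) y y' *
               Φ₂ (Matrix.single c c' 1) z z) := swap4 _
        _ = ∑ b, ∑ c, ∑ b', σ (x, b, c) (x', b', c) *
              Φ₁ (Matrix.single b b' 1) y y' := by
            refine Finset.sum_congr rfl fun b _ => Finset.sum_congr rfl fun c _ =>
              Finset.sum_congr rfl fun b' _ => ?_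
            calc ∑ c', ∑ z, σ (x, b, c) (x', b', c') *
                  (Φ₁ (Matrix.single b b' 1) y y' *
                   Φ₂ (Matrix.single c c' 1) z z)
                = ∑ c', σ (x, b, c) (x', b', c') *
                    (Φ₁ (Matrix.single b b' 1) y y' * (if c = c' then 1 else 0)) := by
                  refine Finset.sum_congr rfl fun c' _ => ?_
                  rw [← htr2 c c']
                  simp only [Finset.mul_sum]
              _ = σ (x, b, c) (x', b', c) * Φ₁ (Matrix.single b b' 1) y y' := by
                  simp [mul_ite, Finset.sum_ite_eq]
        _ = ∑ b, ∑ b', ∑ c, σ (x, b, c) (x', b', c) *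
              Φ₁ (Matrix.single b b' 1) y y' :=
            Finset.sum_congr rfl fun _ _ => Finset.sum_comm
        _ = ∑ b, ∑ b', ρ (x, b) (x', b') * Φ₁ (Matrix.single b b' 1) y y' := by
            refine Finset.sum_congr rfl fun b _ => Finset.sum_congr rfl fun b' _ => ?_
            rw [← Finset.sum_mul]
            congr 1
            rw [← h3]
            rfl
    ext p q
    obtain ⟨x, y⟩ := p
    obtain ⟨x', y'⟩ := q
    rw [hL, hR]
  -- second marginal
  have hmarg2 : ptrace2 (Sᴴ * S) = tmap id (⇑Φ₂) ρ := by
    have hL : ∀ x z x' z' : Fin n, ptrace2 (Sᴴ * S) (x, z) (x', z')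
        = ∑ c, ∑ c', ρ (x, c) (x', c') * Φ₂ (Matrix.single c c' 1) z z' := by
      intro x z x' z'
      show ∑ y, (Sᴴ * S) (x, y, z) (x', y, z') = _
      calc ∑ y, (Sᴴ * S) (x, y, z) (x', y, z')
          = ∑ y, ∑ b, ∑ c, ∑ b', ∑ c', σ (x, b, c) (x', b', c') *
              (Φ₁ (Matrix.single b b' 1) y y *
               Φ₂ (Matrix.single c c' 1) z z') :=
            Finset.sum_congr rfl fun y _ => key (x, y, z) (x', y, z')
        _ = ∑ b, ∑ c, ∑ b', ∑ c', ∑ y, σ (x, b, c) (x', b', c') *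
              (Φ₁ (Matrix.single b b' 1) y y *
               Φ₂ (Matrix.single c c' 1) z z') := swap4 _
        _ = ∑ b, ∑ c, ∑ c', ∑ b', σ (x, b, c) (x', b', c') *
              ((if b = b' then 1 else 0) * Φ₂ (Matrix.single c c' 1) z z') := by
            refine Finset.sum_congr rfl fun b _ => Finset.sum_congr rfl fun c _ =>
              Finset.sum_comm.trans ?_
            refine Finset.sum_congr rfl fun c' _ => Finset.sum_congr rfl fun b' _ => ?_
            rw [← htr1 b b']
            simp only [Finset.mul_sum, Finset.sum_mul]
        _ = ∑ b, ∑ c, ∑ c', σ (x, b, c) (x', b, c') *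
              Φ₂ (Matrix.single c c' 1) z z' := by
            refine Finset.sum_congr rfl fun b _ => Finset.sum_congr rfl fun c _ =>
              Finset.sum_congr rfl fun c' _ => ?_
            simp [mul_ite, ite_mul, Finset.sum_ite_eq]
        _ = ∑ c, ∑ c', ∑ b, σ (x, b, c) (x', b, c') *
              Φ₂ (Matrix.single c c' 1) z z' := swap3 _
        _ = ∑ c, ∑ c', ρ (x, c) (x', c') * Φ₂ (Matrix.single c c' 1) z z' := by
            refine Finset.sum_congr rfl fun c _ => Finset.sum_congr rfl fun c' _ => ?_
            rw [← Finset.sum_mul]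
            congr 1
            rw [← h2]
            rfl
    ext p q
    obtain ⟨x, z⟩ := p
    obtain ⟨x', z'⟩ := q
    rw [hL, hR]
  -- trace one
  have htrace : (Sᴴ * S).trace = 1 := by
    have h1 : (Sᴴ * S).trace = (ptrace3 (Sᴴ * S)).trace := by
      simp only [Matrix.trace, Matrix.diag, ptrace3, Fintype.sum_prod_type]
    rw [h1, hmarg3]
    calc (tmap id (⇑Φ₁) ρ).trace
        = ∑ x, ∑ y, tmap id (⇑Φ₁) ρ (x, y) (x, y) := by
          simp only [Matrix.trace, Matrix.diag, Fintype.sum_prod_type]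
      _ = ∑ x, ∑ y, ∑ b, ∑ b', ρ (x, b) (x, b') *
            Φ₁ (Matrix.single b b' 1) y y :=
          Finset.sum_congr rfl fun x _ => Finset.sum_congr rfl fun y _ => hR Φ₁ x y x y
      _ = ∑ x, ∑ b, ∑ b', ∑ y, ρ (x, b) (x, b') *
            Φ₁ (Matrix.single b b' 1) y y :=
          Finset.sum_congr rfl fun x _ => swap3 _
      _ = ∑ x, ∑ b, ∑ b', ρ (x, b) (x, b') * (if b = b' then 1 else 0) := by
          refine Finset.sum_congr rfl fun x _ => Finset.sum_congr rfl fun b _ =>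
            Finset.sum_congr rfl fun b' _ => ?_
          rw [← htr1 b b']
          simp only [Finset.mul_sum]
      _ = ∑ x, ∑ b, ρ (x, b) (x, b) := by
          refine Finset.sum_congr rfl fun x _ => Finset.sum_congr rfl fun b _ => ?_
          simp [mul_ite, Finset.sum_ite_eq]
      _ = ρ.trace := by
          simp only [Matrix.trace, Matrix.diag, Fintype.sum_prod_type]
      _ = 1 := hρ.2
  exact ⟨Sᴴ * S, ⟨Matrix.posSemidef_conjTranspose_mul_self S, htrace⟩, hmarg3, hmarg2⟩

end
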